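/- The normalized Voigt relative error converges to zero uniformly in ν̃ ∈ ℝ as γ̃ → ∞: for every ε > 0 there exists Γ > 0 such that for all γ̃ > Γ and all ν̃ ∈ ℝ, |(1/√π)·∫_{−∞}^{∞} e^{−t²}·t(2ν̃−t)/(γ̃²+(ν̃−t)²) dt| < ε. -/
import Mathlib


open MeasureTheory

lemma voigt_aux_int1 : Integrable (fun t : ℝ => |t| * Real.exp (-t ^ 2)) := by
  have h := (integrable_mul_exp_neg_mul_sq (b := 1) one_pos).abs
  refine h.congr (Filter.Eventually.of_forall fun t => ?_)
  simp [abs_mul, Real.abs_exp]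

lemma voigt_aux_int2 : Integrable (fun t : ℝ => t ^ 2 * Real.exp (-t ^ 2)) := by
  have h := integrable_rpow_mul_exp_neg_mul_sq (b := 1) one_pos
    (s := 2) (by norm_num)
  refine h.congr (Filter.Eventually.of_forall fun t => ?_)
  simp [Real.rpow_two]

lemma voigt_aux_bound (γ' : ℝ) (hγ : 1 ≤ γ') (ν' t : ℝ) :
    ‖Real.exp (-t ^ 2) * (t * (2 * ν' - t) / (γ' ^ 2 + (ν' - t) ^ 2))‖ ≤
      (|t| + t ^ 2) * Real.exp (-t ^ 2) / γ' := by
  have hγ0 : (0 : ℝ) < γ' := lt_of_lt_of_le one_pos hγ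
  have hD : (0 : ℝ) < γ' ^ 2 + (ν' - t) ^ 2 := by positivity
  have hnum : |t * (2 * ν' - t)| ≤ 2 * (|t| * |ν' - t|) + t ^ 2 := by
    have h1 : t * (2 * ν' - t) = 2 * (t * (ν' - t)) + t ^ 2 := by ring
    calc |t * (2 * ν' - t)| = |2 * (t * (ν' - t)) + t ^ 2| := by rw [h1]
      _ ≤ |2 * (t * (ν' - t))| + |t ^ 2| := abs_add_le _ _
      _ = 2 * (|t| * |ν' - t|) + t ^ 2 := by
          rw [abs_mul, abs_mul, abs_two, abs_of_nonneg (sq_nonneg t)]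
  have hfrac : |t * (2 * ν' - t) / (γ' ^ 2 + (ν' - t) ^ 2)| ≤ (|t| + t ^ 2) / γ' := by
    rw [abs_div, abs_of_pos hD, div_le_div_iff₀ hD hγ0]
    have h2 : 2 * γ' * |ν' - t| ≤ γ' ^ 2 + (ν' - t) ^ 2 := by
      nlinarith [sq_nonneg (γ' - |ν' - t|), sq_abs (ν' - t)]
    nlinarith [abs_nonneg t, abs_nonneg (ν' - t), sq_nonneg t, sq_nonneg (ν' - t),
      mul_le_mul_of_nonneg_right h2 (abs_nonneg t),
      mul_le_mul_of_nonneg_right (mul_le_mul_of_nonneg_left hγ hγ0.le) (sq_nonneg t)]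
  rw [norm_mul, Real.norm_of_nonneg (Real.exp_pos _).le, Real.norm_eq_abs]
  calc Real.exp (-t ^ 2) * |t * (2 * ν' - t) / (γ' ^ 2 + (ν' - t) ^ 2)|
      ≤ Real.exp (-t ^ 2) * ((|t| + t ^ 2) / γ') :=
        mul_le_mul_of_nonneg_left hfrac (Real.exp_pos _).le
    _ = (|t| + t ^ 2) * Real.exp (-t ^ 2) / γ' := by ring

theorem voigt_error_uniform_convergence :
    ∀ ε > 0, ∃ Γ > 0, ∀ γ' > Γ, ∀ ν' : ℝ,
      |(1 / Real.sqrt Real.pi) * ∫ t : ℝ, Real.exp (-t ^ 2) *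
          (t * (2 * ν' - t) / (γ' ^ 2 + (ν' - t) ^ 2))| < ε := by
  intro ε hε
  have hπ : 0 < Real.sqrt Real.pi := Real.sqrt_pos.mpr Real.pi_pos
  set C : ℝ := ∫ t : ℝ, (|t| + t ^ 2) * Real.exp (-t ^ 2) with hCdef
  have hint : Integrable (fun t : ℝ => (|t| + t ^ 2) * Real.exp (-t ^ 2)) := by
    have := voigt_aux_int1.add voigt_aux_int2
    refine this.congr (Filter.Eventually.of_forall fun t => ?_)
    simp only [Pi.add_apply]
    ring
  have hC0 : 0 ≤ C := integral_nonneg fun t => by positivity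
  refine ⟨max 1 (C / (Real.sqrt Real.pi * ε)), lt_of_lt_of_le one_pos (le_max_left _ _), ?_⟩
  intro γ' hγ' ν'
  have hγ1 : 1 < γ' := lt_of_le_of_lt (le_max_left _ _) hγ'
  have hγ0 : 0 < γ' := lt_trans one_pos hγ1
  have hγC : C / (Real.sqrt Real.pi * ε) < γ' := lt_of_le_of_lt (le_max_right _ _) hγ'
  have hgint : Integrable (fun t : ℝ => (|t| + t ^ 2) * Real.exp (-t ^ 2) / γ') :=
    hint.div_const γ'
  have hIb : ‖∫ t : ℝ, Real.exp (-t ^ 2) *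
      (t * (2 * ν' - t) / (γ' ^ 2 + (ν' - t) ^ 2))‖ ≤
      ∫ t : ℝ, (|t| + t ^ 2) * Real.exp (-t ^ 2) / γ' :=
    norm_integral_le_of_norm_le hgint
      (Filter.Eventually.of_forall fun t => voigt_aux_bound γ' hγ1.le ν' t)
  have hgval : (∫ t : ℝ, (|t| + t ^ 2) * Real.exp (-t ^ 2) / γ') = C / γ' := by
    rw [integral_div]
  rw [hgval] at hIb
  have hCγ : C / γ' < Real.sqrt Real.pi * ε := by
    rw [div_lt_iff₀ hγ0]
    calc C < Real.sqrt Real.pi * ε * γ' := by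
            have := (div_lt_iff₀ (by positivity)).mp hγC
            linarith
      _ = Real.sqrt Real.pi * ε * γ' := rfl
  rw [abs_mul, abs_of_pos (by positivity : (0:ℝ) < 1 / Real.sqrt Real.pi)]
  calc 1 / Real.sqrt Real.pi * |∫ t : ℝ, Real.exp (-t ^ 2) *
        (t * (2 * ν' - t) / (γ' ^ 2 + (ν' - t) ^ 2))|
      ≤ 1 / Real.sqrt Real.pi * (C / γ') := by
        apply mul_le_mul_of_nonneg_left _ (by positivity)
        simpa [Real.norm_eq_abs] using hIb
    _ < 1 / Real.sqrt Real.pi * (Real.sqrt Real.pi * ε) := by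
        exact mul_lt_mul_of_pos_left hCγ (by positivity)
    _ = ε := by field_simp
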